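/- Let p be a prime, M a 3-dimensional Z_p-Lie lattice with a well diagonalizing basis (w0,w1,w2) satisfying [w_i,w_{i+1}] = c_{i+2} w_{i+2} (indices mod 3) where t_i = v_p(c_i) satisfy 0 ≤ t0 ≤ t1 ≤ t2. Then [M,M] = ⟨p^{t0}w0, p^{t1}w1, p^{t2}w2⟩ and γ_2(M) := [M,[M,M]] satisfies γ_2(M) = ⟨p^{t0+t1}w0, p^{t0+t1}w1, p^{t0+t2}w2⟩. -/

import Mathlib

/-- Bracket of the top ideal with an ideal `N`, in terms of spanning sets. -/
lemma lie_span_span_aux {R M : Type*} [CommRing R] [LieRing M] [LieAlgebra R M]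
    (N : LieIdeal R M) (s u : Set M)
    (hs : Submodule.span R s = ⊤)
    (hN : (N : Submodule R M) = Submodule.span R u) :
    ((⁅(⊤ : LieIdeal R M), N⁆ : LieIdeal R M) : Submodule R M) =
      Submodule.span R (Set.image2 (fun x n => ⁅x, n⁆) s u) := by
  rw [LieIdeal.toLieSubalgebra_toSubmodule, LieSubmodule.lieIdeal_oper_eq_linear_span']
  rw [LieIdeal.toLieSubalgebra_toSubmodule] at hN
  apply le_antisymm
  · rw [Submodule.span_le]
    rintro m ⟨x, -, n, hn, rfl⟩
    have hx : x ∈ Submodule.span R s := by rw [hs]; trivial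
    have hn' : n ∈ Submodule.span R u := by rw [← hN]; exact hn
    clear hn
    induction hx using Submodule.span_induction with
    | mem x hxs =>
      induction hn' using Submodule.span_induction with
      | mem n hnu => exact Submodule.subset_span (Set.mem_image2_of_mem hxs hnu)
      | zero => simp
      | add a b _ _ ha hb => rw [lie_add]; exact add_mem ha hb
      | smul r a _ ha => rw [lie_smul]; exact Submodule.smul_mem _ r ha
    | zero => simp
    | add a b _ _ ha hb => rw [add_lie]; exact add_mem ha hb
    | smul r a _ ha => rw [smul_lie]; exact Submodule.smul_mem _ r ha
  · rw [Submodule.span_le]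
    rintro m ⟨x, hxs, n, hnu, rfl⟩
    refine Submodule.subset_span ⟨x, trivial, n, ?_, rfl⟩
    rw [← LieSubmodule.mem_toSubmodule, hN]
    exact Submodule.subset_span hnu

set_option maxHeartbeats 2000000 in
/-- for a 3-dimensional `ℤ_[p]`-Lie lattice `M` with well diagonalizing basis
`(w0,w1,w2)`, `[M,M] = ⟨p^{t0}w0, p^{t1}w1, p^{t2}w2⟩` and
`γ₂(M) = [M,[M,M]] = ⟨p^{t0+t1}w0, p^{t0+t1}w1, p^{t0+t2}w2⟩`. -/
theorem stmt13 (p : ℕ) [Fact p.Prime]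
    (M : Type*) [LieRing M] [LieAlgebra ℤ_[p] M]
    (w : Module.Basis (Fin 3) ℤ_[p] M) (c : Fin 3 → ℤ_[p]) (hc : ∀ i, c i ≠ 0)
    (hw : ∀ i : Fin 3, ⁅w i, w (i + 1)⁆ = c (i + 2) • w (i + 2))
    (t : Fin 3 → ℕ) (ht : ∀ i, (t i : ℤ) = (c i).valuation)
    (hord : t 0 ≤ t 1 ∧ t 1 ≤ t 2) :
    ((⁅(⊤ : LieIdeal ℤ_[p] M), (⊤ : LieIdeal ℤ_[p] M)⁆ : LieIdeal ℤ_[p] M) :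
        Submodule ℤ_[p] M) =
      Submodule.span ℤ_[p]
        {((p : ℤ_[p]) ^ (t 0)) • w 0, ((p : ℤ_[p]) ^ (t 1)) • w 1, ((p : ℤ_[p]) ^ (t 2)) • w 2} ∧
    ((⁅(⊤ : LieIdeal ℤ_[p] M),
        (⁅(⊤ : LieIdeal ℤ_[p] M), (⊤ : LieIdeal ℤ_[p] M)⁆ : LieIdeal ℤ_[p] M)⁆ :
        LieIdeal ℤ_[p] M) : Submodule ℤ_[p] M) =
      Submodule.span ℤ_[p]
        {((p : ℤ_[p]) ^ (t 0 + t 1)) • w 0, ((p : ℤ_[p]) ^ (t 0 + t 1)) • w 1,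
         ((p : ℤ_[p]) ^ (t 0 + t 2)) • w 2} := by
  obtain ⟨h01, h12⟩ := hord
  -- unit decomposition of the structure constants
  obtain ⟨u, uspec⟩ : ∃ u : Fin 3 → ℤ_[p]ˣ,
      ∀ i, c i = (u i : ℤ_[p]) * (p : ℤ_[p]) ^ t i := by
    refine ⟨fun i => PadicInt.unitCoeff (hc i), fun i => ?_⟩
    have h := PadicInt.unitCoeff_spec (hc i)
    have hnat : (c i).valuation = t i := by
      exact_mod_cast (ht i).symm
    rwa [hnat] at h
  -- basic Fin 3 facts
  have hj : ∀ i j : Fin 3, j = i ∨ j = i + 1 ∨ j = i + 2 := by decide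
  have hk3 : ∀ k : Fin 3, k = 0 ∨ k = 1 ∨ k = 2 := by decide
  have h3 : ∀ i : Fin 3, i + 2 + 1 = i := by decide
  -- concrete brackets
  have e01 : ⁅w 0, w 1⁆ = c 2 • w 2 := hw 0
  have e12 : ⁅w 1, w 2⁆ = c 0 • w 0 := hw 1
  have e20 : ⁅w 2, w 0⁆ = c 1 • w 1 := hw 2
  have e10 : ⁅w 1, w 0⁆ = -(c 2 • w 2) := by rw [← lie_skew, e01]
  have e21 : ⁅w 2, w 1⁆ = -(c 0 • w 0) := by rw [← lie_skew, e12]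
  have e02 : ⁅w 0, w 2⁆ = -(c 1 • w 1) := by rw [← lie_skew, e20]
  have hspan : Submodule.span ℤ_[p] (Set.range w) = ⊤ := w.span_eq
  have htopcoe : ((⊤ : LieIdeal ℤ_[p] M) : Submodule ℤ_[p] M)
      = Submodule.span ℤ_[p] (Set.range w) := by
    rw [LieIdeal.toLieSubalgebra_toSubmodule, LieSubmodule.top_toSubmodule, hspan]
  -- [M,M] in terms of the c's
  set C : Set M := {c 0 • w 0, c 1 • w 1, c 2 • w 2} with hC
  have hCk : ∀ k : Fin 3, c k • w k ∈ Submodule.span ℤ_[p] C := by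
    intro k
    rcases hk3 k with rfl | rfl | rfl <;> exact Submodule.subset_span (by simp [hC])
  have h1c : ((⁅(⊤ : LieIdeal ℤ_[p] M), (⊤ : LieIdeal ℤ_[p] M)⁆ : LieIdeal ℤ_[p] M) :
      Submodule ℤ_[p] M) = Submodule.span ℤ_[p] C := by
    rw [lie_span_span_aux ⊤ (Set.range w) (Set.range w) hspan htopcoe]
    apply le_antisymm
    · rw [Submodule.span_le]
      rintro m ⟨x, ⟨i, rfl⟩, y, ⟨j, rfl⟩, rfl⟩
      beta_reduce
      rcases hj i j with rfl | rfl | rfl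
      · rw [lie_self]; exact zero_mem _
      · rw [hw i]; exact hCk _
      · have hwi := hw (i + 2)
        rw [h3 i] at hwi
        rw [← lie_skew, hwi]
        exact neg_mem (hCk _)
    · rw [Submodule.span_le]
      intro x hx
      simp only [hC, Set.mem_insert_iff, Set.mem_singleton_iff] at hx
      rcases hx with rfl | rfl | rfl
      · exact Submodule.subset_span ⟨w 1, ⟨1, rfl⟩, w 2, ⟨2, rfl⟩, e12⟩
      · exact Submodule.subset_span ⟨w 2, ⟨2, rfl⟩, w 0, ⟨0, rfl⟩, e20⟩
      · exact Submodule.subset_span ⟨w 0, ⟨0, rfl⟩, w 1, ⟨1, rfl⟩, e01⟩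
  -- scalar manipulation lemmas
  have mulspec : ∀ (a b : Fin 3) (d τ : ℕ), t a + t b = d + τ →
      c a * c b = ((u a : ℤ_[p]) * (u b : ℤ_[p]) * (p : ℤ_[p]) ^ d) * (p : ℤ_[p]) ^ τ := by
    intro a b d τ h
    calc c a * c b
        = ((u a : ℤ_[p]) * (u b : ℤ_[p])) * ((p : ℤ_[p]) ^ (t a) * (p : ℤ_[p]) ^ (t b)) := by
          rw [uspec a, uspec b]; ring
      _ = ((u a : ℤ_[p]) * (u b : ℤ_[p])) * ((p : ℤ_[p]) ^ d * (p : ℤ_[p]) ^ τ) := by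
          rw [← pow_add, ← pow_add, h]
      _ = _ := by ring
  -- part 1 conclusion
  have part1 : ((⁅(⊤ : LieIdeal ℤ_[p] M), (⊤ : LieIdeal ℤ_[p] M)⁆ : LieIdeal ℤ_[p] M) :
      Submodule ℤ_[p] M) =
      Submodule.span ℤ_[p]
        {((p : ℤ_[p]) ^ (t 0)) • w 0, ((p : ℤ_[p]) ^ (t 1)) • w 1,
          ((p : ℤ_[p]) ^ (t 2)) • w 2} := by
    rw [h1c]
    apply le_antisymm
    · rw [Submodule.span_le]
      intro x hx
      simp only [hC, Set.mem_insert_iff, Set.mem_singleton_iff] at hx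
      have key : ∀ k : Fin 3, c k • w k = (u k : ℤ_[p]) • (((p : ℤ_[p]) ^ t k) • w k) := by
        intro k; rw [smul_smul, ← uspec k]
      rcases hx with rfl | rfl | rfl
      · rw [key 0]; exact Submodule.smul_mem _ _ (Submodule.subset_span (by simp))
      · rw [key 1]; exact Submodule.smul_mem _ _ (Submodule.subset_span (by simp))
      · rw [key 2]; exact Submodule.smul_mem _ _ (Submodule.subset_span (by simp))
    · rw [Submodule.span_le]
      intro x hx
      simp only [Set.mem_insert_iff, Set.mem_singleton_iff] at hx
      have key : ∀ k : Fin 3,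
          ((p : ℤ_[p]) ^ t k) • w k = ((((u k)⁻¹ : ℤ_[p]ˣ)) : ℤ_[p]) • (c k • w k) := by
        intro k
        rw [smul_smul, uspec k, ← mul_assoc, Units.inv_mul, one_mul]
      rcases hx with rfl | rfl | rfl
      · rw [key 0]; exact Submodule.smul_mem _ _ (hCk 0)
      · rw [key 1]; exact Submodule.smul_mem _ _ (hCk 1)
      · rw [key 2]; exact Submodule.smul_mem _ _ (hCk 2)
  refine ⟨part1, ?_⟩
  -- part 2
  have hT : True := trivial
  have memT : ∀ (a b k : Fin 3) (d τ : ℕ), t a + t b = d + τ →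
      ((p : ℤ_[p]) ^ τ) • w k ∈ Submodule.span ℤ_[p] ({((p : ℤ_[p]) ^ (t 0 + t 1)) • w 0, ((p : ℤ_[p]) ^ (t 0 + t 1)) • w 1, ((p : ℤ_[p]) ^ (t 0 + t 2)) • w 2} : Set M) →
      (c a * c b) • w k ∈ Submodule.span ℤ_[p] ({((p : ℤ_[p]) ^ (t 0 + t 1)) • w 0, ((p : ℤ_[p]) ^ (t 0 + t 1)) • w 1, ((p : ℤ_[p]) ^ (t 0 + t 2)) • w 2} : Set M) := by
    intro a b k d τ h hmem
    rw [mulspec a b d τ h, mul_smul]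
    exact Submodule.smul_mem _ _ hmem
  rw [lie_span_span_aux _ (Set.range w) C hspan h1c]
  apply le_antisymm
  · rw [Submodule.span_le]
    rintro m ⟨x, ⟨i, rfl⟩, y, hy, rfl⟩
    beta_reduce
    simp only [hC, Set.mem_insert_iff, Set.mem_singleton_iff] at hy
    rcases hk3 i with rfl | rfl | rfl <;> rcases hy with rfl | rfl | rfl
    · rw [lie_smul, lie_self, smul_zero]; exact zero_mem _
    · rw [lie_smul, e01, smul_smul]
      exact memT 1 2 2 (t 1 - t 0) (t 0 + t 2) (by omega)
        (Submodule.subset_span (by simp))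
    · rw [lie_smul, e02, smul_neg, smul_smul]
      exact neg_mem (memT 2 1 1 (t 2 - t 0) (t 0 + t 1) (by omega)
        (Submodule.subset_span (by simp)))
    · rw [lie_smul, e10, smul_neg, smul_smul]
      exact neg_mem (memT 0 2 2 0 (t 0 + t 2) (by omega)
        (Submodule.subset_span (by simp)))
    · rw [lie_smul, lie_self, smul_zero]; exact zero_mem _
    · rw [lie_smul, e12, smul_smul]
      exact memT 2 0 0 (t 2 - t 1) (t 0 + t 1) (by omega)
        (Submodule.subset_span (by simp))
    · rw [lie_smul, e20, smul_smul]
      exact memT 0 1 1 0 (t 0 + t 1) (by omega)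
        (Submodule.subset_span (by simp))
    · rw [lie_smul, e21, smul_neg, smul_smul]
      exact neg_mem (memT 1 0 0 0 (t 0 + t 1) (by omega)
        (Submodule.subset_span (by simp)))
    · rw [lie_smul, lie_self, smul_zero]; exact zero_mem _
  · rw [Submodule.span_le]
    have bmem : ∀ (i : Fin 3) (y : M), y ∈ C →
        ⁅w i, y⁆ ∈ Submodule.span ℤ_[p]
          (Set.image2 (fun x n => ⁅x, n⁆) (Set.range w) C) :=
      fun i y hy => Submodule.subset_span ⟨w i, ⟨i, rfl⟩, y, hy, rfl⟩
    have invEq : ∀ (a b k : Fin 3),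
        ((p : ℤ_[p]) ^ (t a + t b)) • w k
          = ((((u a * u b)⁻¹ : ℤ_[p]ˣ)) : ℤ_[p]) • ((c a * c b) • w k) := by
      intro a b k
      have hcab : c a * c b = ((u a * u b : ℤ_[p]ˣ) : ℤ_[p]) * (p : ℤ_[p]) ^ (t a + t b) := by
        rw [Units.val_mul, uspec a, uspec b, pow_add]; ring
      rw [smul_smul, hcab, ← mul_assoc, Units.inv_mul, one_mul]
    intro x hx
    simp only [Set.mem_insert_iff, Set.mem_singleton_iff] at hx
    rcases hx with rfl | rfl | rfl
    · have e : (c 1 * c 0) • w 0 = -⁅w 2, c 1 • w 1⁆ := by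
        rw [lie_smul, e21, smul_neg, smul_smul, neg_neg]
      rw [show t 0 + t 1 = t 1 + t 0 from Nat.add_comm _ _, invEq 1 0 0, e]
      exact Submodule.smul_mem _ _ (neg_mem (bmem 2 _ (by simp [hC])))
    · have e : (c 0 * c 1) • w 1 = ⁅w 2, c 0 • w 0⁆ := by
        rw [lie_smul, e20, smul_smul]
      rw [invEq 0 1 1, e]
      exact Submodule.smul_mem _ _ (bmem 2 _ (by simp [hC]))
    · have e : (c 0 * c 2) • w 2 = -⁅w 1, c 0 • w 0⁆ := by
        rw [lie_smul, e10, smul_neg, smul_smul, neg_neg]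
      rw [invEq 0 2 2, e]
      exact Submodule.smul_mem _ _ (neg_mem (bmem 1 _ (by simp [hC])))
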